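/- Let N ≥ 2, γ > 0, and λ_α > γ²/4 pairwise distinct for α ∈ {2, …, N}; set f_α = √(4λ_α − γ²), s_α(t) = sin(f_α t/2), c_α(t) = cos(f_α t/2). Let 𝒫_β ∈ ℝ and V a real symmetric matrix with entries V_{αβ} (α, β ∈ {2, …, N}). Fix α and define ξ̇⁰_β(t) = (2𝒫_β/f_β)·e^{−γt/2}·s_β(t) for each β, and D(t) = (𝒫_α/f_α)·e^{−γt/2}·[2·s_α(t)·(γ²/f_α²)·V_{αα} − γt·V_{αα}·(s_α(t) + (γ/f_α)·c_α(t))] + γ·Σ_{β≠α, 2≤β≤N} (V_{αβ}·𝒫_β/(λ_α − λ_β))·e^{−γt/2}·[(γ/f_β)·s_β(t) − (γ/f_α)·s_α(t) + c_α(t) − c_β(t)]. Then D(0) = 0 and for all t ≥ 0: D'(t) + γ·D(t) + λ_α·∫₀^t D(s) ds = −γ·Σ_{β=2}^{N} V_{αβ}·ξ̇⁰_β(t). -/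

import Mathlib

noncomputable def myES (γ f t : ℝ) : ℝ := Real.exp (-γ*t/2) * Real.sin (f*t/2)
noncomputable def myEC (γ f t : ℝ) : ℝ := Real.exp (-γ*t/2) * Real.cos (f*t/2)

lemma hd_exp (γ t : ℝ) : HasDerivAt (fun s => Real.exp (-γ*s/2)) (-γ/2 * Real.exp (-γ*t/2)) t := by
  have h : HasDerivAt (fun s : ℝ => -γ*s/2) (-γ/2) t := by
    simpa using ((hasDerivAt_id t).const_mul (-γ)).div_const 2
  simpa [mul_comm] using h.exp

lemma hd_sin (f t : ℝ) : HasDerivAt (fun s => Real.sin (f*s/2)) (f/2 * Real.cos (f*t/2)) t := by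
  have h : HasDerivAt (fun s : ℝ => f*s/2) (f/2) t := by
    simpa using ((hasDerivAt_id t).const_mul f).div_const 2
  simpa [mul_comm] using h.sin

lemma hd_cos (f t : ℝ) : HasDerivAt (fun s => Real.cos (f*s/2)) (-(f/2) * Real.sin (f*t/2)) t := by
  have h : HasDerivAt (fun s : ℝ => f*s/2) (f/2) t := by
    simpa using ((hasDerivAt_id t).const_mul f).div_const 2
  simpa [mul_comm] using h.cos

lemma hd_ES (γ f t : ℝ) : HasDerivAt (myES γ f) (-γ/2 * myES γ f t + f/2 * myEC γ f t) t := by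
  have := (hd_exp γ t).fun_mul (hd_sin f t)
  unfold myES myEC
  refine this.congr_deriv ?_
  ring

lemma hd_EC (γ f t : ℝ) : HasDerivAt (myEC γ f) (-γ/2 * myEC γ f t - f/2 * myES γ f t) t := by
  have := (hd_exp γ t).fun_mul (hd_cos f t)
  unfold myES myEC
  refine this.congr_deriv ?_
  ring

lemma hd_tES (γ f t : ℝ) : HasDerivAt (fun s => s * myES γ f s)
    (myES γ f t + t * (-γ/2 * myES γ f t + f/2 * myEC γ f t)) t := by
  have := (hasDerivAt_id t).fun_mul (hd_ES γ f t)
  refine this.congr_deriv ?_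
  simp only [id_eq]
  ring

lemma hd_tEC (γ f t : ℝ) : HasDerivAt (fun s => s * myEC γ f s)
    (myEC γ f t + t * (-γ/2 * myEC γ f t - f/2 * myES γ f t)) t := by
  have := (hasDerivAt_id t).fun_mul (hd_EC γ f t)
  refine this.congr_deriv ?_
  simp only [id_eq]
  ring

@[fun_prop]
lemma cont_ES (γ f : ℝ) : Continuous (myES γ f) := by
  unfold myES; fun_prop

@[fun_prop]
lemma cont_EC (γ f : ℝ) : Continuous (myEC γ f) := by
  unfold myEC; fun_prop

noncomputable def myIES (γ f lam t : ℝ) : ℝ := (-γ * myES γ f t - f * myEC γ f t)/(2*lam)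
noncomputable def myIEC (γ f lam t : ℝ) : ℝ := (f * myES γ f t - γ * myEC γ f t)/(2*lam)
noncomputable def myItES (γ f lam t : ℝ) : ℝ :=
  t * myIES γ f lam t + ((f^2-γ^2) * myES γ f t - 2*f*γ* myEC γ f t)/(4*lam^2)
noncomputable def myItEC (γ f lam t : ℝ) : ℝ :=
  t * myIEC γ f lam t + (2*f*γ* myES γ f t + (f^2-γ^2) * myEC γ f t)/(4*lam^2)

lemma hd_IES (γ f lam : ℝ) (h : f^2 + γ^2 = 4*lam) (hl : lam ≠ 0) (t : ℝ) :
    HasDerivAt (myIES γ f lam) (myES γ f t) t := by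
  have H := (((hd_ES γ f t).const_mul (-γ)).sub ((hd_EC γ f t).const_mul f)).div_const (2*lam)
  have H2 : HasDerivAt (myIES γ f lam)
      ((-γ * (-γ/2 * myES γ f t + f/2 * myEC γ f t) - f * (-γ/2 * myEC γ f t - f/2 * myES γ f t))/(2*lam)) t := H
  convert H2 using 1
  rw [eq_div_iff (by simpa using hl : (2:ℝ)*lam ≠ 0)]
  linear_combination (-(myES γ f t)/2) * h

lemma hd_IEC (γ f lam : ℝ) (h : f^2 + γ^2 = 4*lam) (hl : lam ≠ 0) (t : ℝ) :
    HasDerivAt (myIEC γ f lam) (myEC γ f t) t := by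
  have H := (((hd_ES γ f t).const_mul f).sub ((hd_EC γ f t).const_mul γ)).div_const (2*lam)
  have H2 : HasDerivAt (myIEC γ f lam)
      ((f * (-γ/2 * myES γ f t + f/2 * myEC γ f t) - γ * (-γ/2 * myEC γ f t - f/2 * myES γ f t))/(2*lam)) t := H
  convert H2 using 1
  rw [eq_div_iff (by simpa using hl : (2:ℝ)*lam ≠ 0)]
  linear_combination (-(myEC γ f t)/2) * h

lemma hd_ItES (γ f lam : ℝ) (h : f^2 + γ^2 = 4*lam) (hl : lam ≠ 0) (t : ℝ) :
    HasDerivAt (myItES γ f lam) (t * myES γ f t) t := by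
  have H := ((hasDerivAt_id t).mul (hd_IES γ f lam h hl t)).add
    ((((hd_ES γ f t).const_mul (f^2-γ^2)).sub ((hd_EC γ f t).const_mul (2*f*γ))).div_const (4*lam^2))
  have H2 : HasDerivAt (myItES γ f lam)
      ((1 * myIES γ f lam t + t * myES γ f t) +
        ((f^2-γ^2) * (-γ/2 * myES γ f t + f/2 * myEC γ f t)
          - 2*f*γ * (-γ/2 * myEC γ f t - f/2 * myES γ f t))/(4*lam^2)) t := H
  convert H2 using 1
  have hlam4 : lam = (f^2 + γ^2)/4 := by linarith
  subst hlam4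
  have h0 : f^2 + γ^2 ≠ 0 := by intro hh; exact hl (by rw [hh]; norm_num)
  simp only [myIES]
  field_simp
  ring

lemma hd_ItEC (γ f lam : ℝ) (h : f^2 + γ^2 = 4*lam) (hl : lam ≠ 0) (t : ℝ) :
    HasDerivAt (myItEC γ f lam) (t * myEC γ f t) t := by
  have H := ((hasDerivAt_id t).mul (hd_IEC γ f lam h hl t)).add
    ((((hd_ES γ f t).const_mul (2*f*γ)).add ((hd_EC γ f t).const_mul (f^2-γ^2))).div_const (4*lam^2))
  have H2 : HasDerivAt (myItEC γ f lam)
      ((1 * myIEC γ f lam t + t * myEC γ f t) +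
        (2*f*γ * (-γ/2 * myES γ f t + f/2 * myEC γ f t)
          + (f^2-γ^2) * (-γ/2 * myEC γ f t - f/2 * myES γ f t))/(4*lam^2)) t := H
  convert H2 using 1
  have hlam4 : lam = (f^2 + γ^2)/4 := by linarith
  subst hlam4
  have h0 : f^2 + γ^2 ≠ 0 := by intro hh; exact hl (by rw [hh]; norm_num)
  simp only [myIEC]
  field_simp
  ring

set_option maxHeartbeats 2000000 in
lemma diag_identity (γ la fa PA W t : ℝ) (ha : fa^2 + γ^2 = 4*la) (hla : la ≠ 0) (hfa : fa ≠ 0) :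
    (((PA / fa) * (2*(γ^2/fa^2) * W)) * (-γ/2 * myES γ fa t + fa/2 * myEC γ fa t) + (-((PA / fa) * γ * W)) * (myES γ fa t + t * (-γ/2 * myES γ fa t + fa/2 * myEC γ fa t)) + (-((PA / fa) * γ * W * (γ/fa))) * (myEC γ fa t + t * (-γ/2 * myEC γ fa t - fa/2 * myES γ fa t))) + γ * (((PA / fa) * (2*(γ^2/fa^2) * W)) * myES γ fa t + (-((PA / fa) * γ * W)) * (t * myES γ fa t) + (-((PA / fa) * γ * W * (γ/fa))) * (t * myEC γ fa t)) + la * ((((PA / fa) * (2*(γ^2/fa^2) * W)) * myIES γ fa la t + (-((PA / fa) * γ * W)) * myItES γ fa la t + (-((PA / fa) * γ * W * (γ/fa))) * myItEC γ fa la t) - (((PA / fa) * (2*(γ^2/fa^2) * W)) * myIES γ fa la 0 + (-((PA / fa) * γ * W)) * myItES γ fa la 0 + (-((PA / fa) * γ * W * (γ/fa))) * myItEC γ fa la 0))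
    = -γ * (W * (2*PA/fa * myES γ fa t)) := by
  have hlam4 : la = (fa^2 + γ^2)/4 := by linarith
  subst hlam4
  have h0 : fa^2 + γ^2 ≠ 0 := by intro hh; exact hla (by rw [hh]; norm_num)
  simp only [myItES, myItEC, myIES, myIEC, myES, myEC, mul_zero, neg_zero, zero_div,
    zero_mul, Real.exp_zero, Real.sin_zero, Real.cos_zero]
  field_simp
  ring

set_option maxHeartbeats 2000000 in
lemma offdiag_identity (γ la lb fa fb PB W t : ℝ) (ha : fa^2 + γ^2 = 4*la) (hb : fb^2 + γ^2 = 4*lb)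
    (hla : la ≠ 0) (hlb : lb ≠ 0) (hfa : fa ≠ 0) (hfb : fb ≠ 0) (hab : la ≠ lb) :
    (((γ * (W * PB / (la - lb))) * (γ/fb)) * (-γ/2 * myES γ fb t + fb/2 * myEC γ fb t) + (-(γ * (W * PB / (la - lb)))) * (-γ/2 * myEC γ fb t - fb/2 * myES γ fb t) + (-((γ * (W * PB / (la - lb))) * (γ/fa))) * (-γ/2 * myES γ fa t + fa/2 * myEC γ fa t) + (γ * (W * PB / (la - lb))) * (-γ/2 * myEC γ fa t - fa/2 * myES γ fa t)) + γ * (((γ * (W * PB / (la - lb))) * (γ/fb)) * myES γ fb t + (-(γ * (W * PB / (la - lb)))) * myEC γ fb t + (-((γ * (W * PB / (la - lb))) * (γ/fa))) * myES γ fa t + (γ * (W * PB / (la - lb))) * myEC γ fa t) + la * ((((γ * (W * PB / (la - lb))) * (γ/fb)) * myIES γ fb lb t + (-(γ * (W * PB / (la - lb)))) * myIEC γ fb lb t + (-((γ * (W * PB / (la - lb))) * (γ/fa))) * myIES γ fa la t + (γ * (W * PB / (la - lb))) * myIEC γ fa la t) - (((γ * (W * PB / (la - lb))) * (γ/fb))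 * myIES γ fb lb 0 + (-(γ * (W * PB / (la - lb)))) * myIEC γ fb lb 0 + (-((γ * (W * PB / (la - lb))) * (γ/fa))) * myIES γ fa la 0 + (γ * (W * PB / (la - lb))) * myIEC γ fa la 0))
    = -γ * (W * (2*PB/fb * myES γ fb t)) := by
  have hlam4 : la = (fa^2 + γ^2)/4 := by linarith
  subst hlam4
  have hlam4' : lb = (fb^2 + γ^2)/4 := by linarith
  subst hlam4'
  have h0a : fa^2 + γ^2 ≠ 0 := by intro hh; exact hla (by rw [hh]; norm_num)
  have h0b : fb^2 + γ^2 ≠ 0 := by intro hh; exact hlb (by rw [hh]; norm_num)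
  have hab' : (fa^2 + γ^2)/4 - (fb^2 + γ^2)/4 ≠ 0 := sub_ne_zero.mpr hab
  have hfab2 : fa^2 - fb^2 ≠ 0 := by intro hh; exact hab' (by linarith)
  simp only [myIES, myIEC, myES, myEC, mul_zero, neg_zero, zero_div,
    zero_mul, Real.exp_zero, Real.sin_zero, Real.cos_zero]
  field_simp [h0a, h0b, hfa, hfb, hfab2]
  ring



set_option maxHeartbeats 2000000 in

/-- Verification of Proposition 4 of the paper: the first-order correction
`D = ξ̇¹_α` to the mode frequency in equation (44) satisfies the first-order
variational equation (written in integrated form)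
`D'(t) + γ D(t) + λ_α ∫₀^t D(s) ds = −γ Σ_β V_{αβ} ξ̇⁰_β(t)` for `t ≥ 0`,
with `D(0) = 0`, where `ξ̇⁰_β` is the unperturbed solution of Proposition 1. -/
theorem stmt_16 (N : ℕ) (hN : 2 ≤ N) (γ : ℝ) (hγ : 0 < γ)
    (lam : ℕ → ℝ) (hlam : ∀ α ∈ Finset.Icc 2 N, γ ^ 2 / 4 < lam α)
    (hdist : ∀ α ∈ Finset.Icc 2 N, ∀ β ∈ Finset.Icc 2 N, α ≠ β → lam α ≠ lam β)
    (f : ℕ → ℝ) (hf : ∀ α, f α = Real.sqrt (4 * lam α - γ ^ 2))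
    (P : ℕ → ℝ) (V : ℕ → ℕ → ℝ) (hV : ∀ α β, V α β = V β α)
    (α : ℕ) (hα : α ∈ Finset.Icc 2 N)
    (ξ0 : ℕ → ℝ → ℝ)
    (hξ0 : ∀ (β : ℕ) (t : ℝ), ξ0 β t =
      (2 * P β / f β) * Real.exp (-γ * t / 2) * Real.sin (f β * t / 2))
    (D : ℝ → ℝ)
    (hD : ∀ t : ℝ, D t =
      (P α / f α) * Real.exp (-γ * t / 2) *
        (2 * Real.sin (f α * t / 2) * (γ ^ 2 / (f α) ^ 2) * V α α
          - γ * t * V α α *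
            (Real.sin (f α * t / 2) + (γ / f α) * Real.cos (f α * t / 2)))
      + γ * ∑ β ∈ (Finset.Icc 2 N).erase α,
          (V α β * P β / (lam α - lam β)) * Real.exp (-γ * t / 2) *
            ((γ / f β) * Real.sin (f β * t / 2)
              - (γ / f α) * Real.sin (f α * t / 2)
              + Real.cos (f α * t / 2) - Real.cos (f β * t / 2))) :
    D 0 = 0 ∧
    ∀ t : ℝ, 0 ≤ t →
      deriv D t + γ * D t + lam α * ∫ s in (0 : ℝ)..t, D s
        = -γ * ∑ β ∈ Finset.Icc 2 N, V α β * ξ0 β t := by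
  -- basic facts
  have hfacts : ∀ β ∈ Finset.Icc 2 N, (f β)^2 + γ^2 = 4 * lam β ∧ f β ≠ 0 ∧ lam β ≠ 0 := by
    intro β hβ
    have h1 : γ^2/4 < lam β := hlam β hβ
    have h2 : (0:ℝ) < 4 * lam β - γ^2 := by nlinarith
    have h3 : f β = Real.sqrt (4 * lam β - γ^2) := hf β
    have h4 : (f β)^2 = 4 * lam β - γ^2 := by
      rw [h3, Real.sq_sqrt h2.le]
    refine ⟨by linarith, ?_, ?_⟩
    · have : 0 < f β := by rw [h3]; exact Real.sqrt_pos.mpr h2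
      exact this.ne'
    · have : 0 < lam β := by nlinarith [sq_nonneg γ]
      exact this.ne'
  obtain ⟨ha4, hfa, hla⟩ := hfacts α hα
  set S := (Finset.Icc 2 N).erase α with hS
  have hfactsS : ∀ β ∈ S, (f β)^2 + γ^2 = 4 * lam β ∧ f β ≠ 0 ∧ lam β ≠ 0 ∧ lam α ≠ lam β := by
    intro β hβ
    have hβI : β ∈ Finset.Icc 2 N := Finset.mem_of_mem_erase hβ
    obtain ⟨h1, h2, h3⟩ := hfacts β hβI
    exact ⟨h1, h2, h3, hdist α hα β hβI (Finset.ne_of_mem_erase hβ).symm⟩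
  -- canonical form of D
  have hD2 : ∀ s : ℝ, D s =
      ((((P α) / (f α)) * (2*(γ^2/(f α)^2) * (V α α))) * myES γ (f α) s + (-(((P α) / (f α)) * γ * (V α α))) * (s * myES γ (f α) s) + (-(((P α) / (f α)) * γ * (V α α) * (γ/(f α)))) * (s * myEC γ (f α) s))
      + ∑ β ∈ S, (((γ * ((V α β) * (P β) / ((lam α) - (lam β)))) * (γ/(f β))) * myES γ (f β) s + (-(γ * ((V α β) * (P β) / ((lam α) - (lam β))))) * myEC γ (f β) s + (-((γ * ((V α β) * (P β) / ((lam α) - (lam β)))) * (γ/(f α)))) * myES γ (f α) s + (γ * ((V α β) * (P β) / ((lam α) - (lam β)))) * myEC γ (f α) s) := by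
    intro s
    rw [hD s]
    have hsum : γ * ∑ β ∈ S, (V α β * P β / (lam α - lam β)) * Real.exp (-γ * s / 2) *
            ((γ / f β) * Real.sin (f β * s / 2)
              - (γ / f α) * Real.sin (f α * s / 2)
              + Real.cos (f α * s / 2) - Real.cos (f β * s / 2))
        = ∑ β ∈ S, (((γ * ((V α β) * (P β) / ((lam α) - (lam β)))) * (γ/(f β))) * myES γ (f β) s + (-(γ * ((V α β) * (P β) / ((lam α) - (lam β))))) * myEC γ (f β) s + (-((γ * ((V α β) * (P β) / ((lam α) - (lam β)))) * (γ/(f α)))) * myES γ (f α) s + (γ * ((V α β) * (P β) / ((lam α) - (lam β)))) * myEC γ (f α) s) := by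
      rw [Finset.mul_sum]
      refine Finset.sum_congr rfl (fun β _ => ?_)
      simp only [myES, myEC]
      ring
    rw [hsum]
    simp only [myES, myEC]
    ring
  -- D 0 = 0
  have hD0 : D 0 = 0 := by
    rw [hD 0]
    norm_num
  refine ⟨hD0, ?_⟩
  intro t ht
  -- derivative of D
  have hDfun : (fun s : ℝ => ((((P α) / (f α)) * (2*(γ^2/(f α)^2) * (V α α))) * myES γ (f α) s + (-(((P α) / (f α)) * γ * (V α α))) * (s * myES γ (f α) s) + (-(((P α) / (f α)) * γ * (V α α) * (γ/(f α)))) * (s * myEC γ (f α) s)) + ∑ β ∈ S, (((γ * ((V α β) * (P β) / ((lam α) - (lam β)))) * (γ/(f β))) * myES γ (f β) s + (-(γ * ((V α β) * (P β) / ((lam α) - (lam β))))) * myEC γ (f β) s + (-((γ * ((V α β) * (P β) / ((lam α) - (lam β)))) * (γ/(f α)))) * myES γ (f α) s + (γ * ((V α β) * (P β) / ((lam α) - (lam β)))) * myEC γ (f α) s)) = D := (funext hD2).symm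
  have hdD : HasDerivAt D
      (((((P α) / (f α)) * (2*(γ^2/(f α)^2) * (V α α))) * (-γ/2 * myES γ (f α) t + (f α)/2 * myEC γ (f α) t) + (-(((P α) / (f α)) * γ * (V α α))) * (myES γ (f α) t + t * (-γ/2 * myES γ (f α) t + (f α)/2 * myEC γ (f α) t)) + (-(((P α) / (f α)) * γ * (V α α) * (γ/(f α)))) * (myEC γ (f α) t + t * (-γ/2 * myEC γ (f α) t - (f α)/2 * myES γ (f α) t)))
        + ∑ β ∈ S, (((γ * ((V α β) * (P β) / ((lam α) - (lam β)))) * (γ/(f β))) * (-γ/2 * myES γ (f β) t + (f β)/2 * myEC γ (f β) t) + (-(γ * ((V α β) * (P β) / ((lam α) - (lam β))))) * (-γ/2 * myEC γ (f β) t - (f β)/2 * myES γ (f β) t) + (-((γ * ((V α β) * (P β) / ((lam α) - (lam β)))) * (γ/(f α)))) * (-γ/2 * myES γ (f α) t + (f α)/2 * myEC γ (f α) t) + (γ * ((V α β) * (P β) / ((lam α) - (lam β)))) * (-γ/2 * myEC γ (f α) t - (f α)/2 * myES γ (f α) t))) t := by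
    have H : HasDerivAt (fun s : ℝ => ((((P α) / (f α)) * (2*(γ^2/(f α)^2) * (V α α))) * myES γ (f α) s + (-(((P α) / (f α)) * γ * (V α α))) * (s * myES γ (f α) s) + (-(((P α) / (f α)) * γ * (V α α) * (γ/(f α)))) * (s * myEC γ (f α) s)) + ∑ β ∈ S, (((γ * ((V α β) * (P β) / ((lam α) - (lam β)))) * (γ/(f β))) * myES γ (f β) s + (-(γ * ((V α β) * (P β) / ((lam α) - (lam β))))) * myEC γ (f β) s + (-((γ * ((V α β) * (P β) / ((lam α) - (lam β)))) * (γ/(f α)))) * myES γ (f α) s + (γ * ((V α β) * (P β) / ((lam α) - (lam β)))) * myEC γ (f α) s))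
        (((((P α) / (f α)) * (2*(γ^2/(f α)^2) * (V α α))) * (-γ/2 * myES γ (f α) t + (f α)/2 * myEC γ (f α) t) + (-(((P α) / (f α)) * γ * (V α α))) * (myES γ (f α) t + t * (-γ/2 * myES γ (f α) t + (f α)/2 * myEC γ (f α) t)) + (-(((P α) / (f α)) * γ * (V α α) * (γ/(f α)))) * (myEC γ (f α) t + t * (-γ/2 * myEC γ (f α) t - (f α)/2 * myES γ (f α) t)))
          + ∑ β ∈ S, (((γ * ((V α β) * (P β) / ((lam α) - (lam β)))) * (γ/(f β))) * (-γ/2 * myES γ (f β) t + (f β)/2 * myEC γ (f β) t) + (-(γ * ((V α β) * (P β) / ((lam α) - (lam β))))) * (-γ/2 * myEC γ (f β) t - (f β)/2 * myES γ (f β) t) + (-((γ * ((V α β) * (P β) / ((lam α) - (lam β)))) * (γ/(f α)))) * (-γ/2 * myES γ (f α) t + (f α)/2 * myEC γ (f α) t) + (γ * ((V α β) * (P β) / ((lam α) - (lam β)))) * (-γ/2 * myEC γ (f α) t - (f α)/2 * myES γ (f α) t))) t := by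
      apply HasDerivAt.add
      · exact (((hd_ES γ (f α) t).const_mul (((P α) / (f α)) * (2*(γ^2/(f α)^2) * (V α α)))).add
          ((hd_tES γ (f α) t).const_mul (-(((P α) / (f α)) * γ * (V α α))))).add
          ((hd_tEC γ (f α) t).const_mul (-(((P α) / (f α)) * γ * (V α α) * (γ/(f α)))))
      · exact HasDerivAt.fun_sum (fun β _ => ((((hd_ES γ (f β) t).const_mul _).add
          ((hd_EC γ (f β) t).const_mul _)).add
          ((hd_ES γ (f α) t).const_mul _)).add ((hd_EC γ (f α) t).const_mul _))
    exact hDfun ▸ H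
  -- continuity of D
  have hcont : Continuous D := by
    rw [← hDfun]
    apply Continuous.add
    · fun_prop
    · exact continuous_finset_sum _ (fun β _ => by fun_prop)
  -- antiderivative of D
  have hFder : ∀ x : ℝ, HasDerivAt
      (fun s : ℝ => ((((P α) / (f α)) * (2*(γ^2/(f α)^2) * (V α α))) * myIES γ (f α) (lam α) s + (-(((P α) / (f α)) * γ * (V α α))) * myItES γ (f α) (lam α) s + (-(((P α) / (f α)) * γ * (V α α) * (γ/(f α)))) * myItEC γ (f α) (lam α) s) + ∑ β ∈ S, (((γ * ((V α β) * (P β) / ((lam α) - (lam β)))) * (γ/(f β))) * myIES γ (f β) (lam β) s + (-(γ * ((V α β) * (P β) / ((lam α) - (lam β))))) * myIEC γ (f β) (lam β) s + (-((γ * ((V α β) * (P β) / ((lam α) - (lam β)))) * (γ/(f α)))) * myIES γ (f α) (lam α) s + (γ * ((V α β) * (P β) / ((lam α) - (lam β)))) * myIEC γ (f α) (lam α) s))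
      (D x) x := by
    intro x
    have H : HasDerivAt (fun s : ℝ => ((((P α) / (f α)) * (2*(γ^2/(f α)^2) * (V α α))) * myIES γ (f α) (lam α) s + (-(((P α) / (f α)) * γ * (V α α))) * myItES γ (f α) (lam α) s + (-(((P α) / (f α)) * γ * (V α α) * (γ/(f α)))) * myItEC γ (f α) (lam α) s) + ∑ β ∈ S, (((γ * ((V α β) * (P β) / ((lam α) - (lam β)))) * (γ/(f β))) * myIES γ (f β) (lam β) s + (-(γ * ((V α β) * (P β) / ((lam α) - (lam β))))) * myIEC γ (f β) (lam β) s + (-((γ * ((V α β) * (P β) / ((lam α) - (lam β)))) * (γ/(f α)))) * myIES γ (f α) (lam α) s + (γ * ((V α β) * (P β) / ((lam α) - (lam β)))) * myIEC γ (f α) (lam α) s))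
        (((((P α) / (f α)) * (2*(γ^2/(f α)^2) * (V α α))) * myES γ (f α) x + (-(((P α) / (f α)) * γ * (V α α))) * (x * myES γ (f α) x) + (-(((P α) / (f α)) * γ * (V α α) * (γ/(f α)))) * (x * myEC γ (f α) x))
          + ∑ β ∈ S, (((γ * ((V α β) * (P β) / ((lam α) - (lam β)))) * (γ/(f β))) * myES γ (f β) x + (-(γ * ((V α β) * (P β) / ((lam α) - (lam β))))) * myEC γ (f β) x + (-((γ * ((V α β) * (P β) / ((lam α) - (lam β)))) * (γ/(f α)))) * myES γ (f α) x + (γ * ((V α β) * (P β) / ((lam α) - (lam β)))) * myEC γ (f α) x)) x := by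
      apply HasDerivAt.add
      · exact (((hd_IES γ (f α) (lam α) ha4 hla x).const_mul (((P α) / (f α)) * (2*(γ^2/(f α)^2) * (V α α)))).add
          ((hd_ItES γ (f α) (lam α) ha4 hla x).const_mul (-(((P α) / (f α)) * γ * (V α α))))).add
          ((hd_ItEC γ (f α) (lam α) ha4 hla x).const_mul (-(((P α) / (f α)) * γ * (V α α) * (γ/(f α)))))
      · refine HasDerivAt.fun_sum (fun β hβ => ?_)
        obtain ⟨hb4, hfb, hlb, _⟩ := hfactsS β hβ
        exact ((((hd_IES γ (f β) (lam β) hb4 hlb x).const_mul _).add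
          ((hd_IEC γ (f β) (lam β) hb4 hlb x).const_mul _)).add
          ((hd_IES γ (f α) (lam α) ha4 hla x).const_mul _)).add
            ((hd_IEC γ (f α) (lam α) ha4 hla x).const_mul _)
    rw [hD2 x]
    exact H
  have hint : ∫ s in (0:ℝ)..t, D s =
      (((((P α) / (f α)) * (2*(γ^2/(f α)^2) * (V α α))) * myIES γ (f α) (lam α) t + (-(((P α) / (f α)) * γ * (V α α))) * myItES γ (f α) (lam α) t + (-(((P α) / (f α)) * γ * (V α α) * (γ/(f α)))) * myItEC γ (f α) (lam α) t) + ∑ β ∈ S, (((γ * ((V α β) * (P β) / ((lam α) - (lam β)))) * (γ/(f β))) * myIES γ (f β) (lam β) t + (-(γ * ((V α β) * (P β) / ((lam α) - (lam β))))) * myIEC γ (f β) (lam β) t + (-((γ * ((V α β) * (P β) / ((lam α) - (lam β)))) * (γ/(f α)))) * myIES γ (f α) (lam α) t + (γ * ((V α β) * (P β) / ((lam α) - (lam β)))) * myIEC γ (f α) (lam α) t))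
      - (((((P α) / (f α)) * (2*(γ^2/(f α)^2) * (V α α))) * myIES γ (f α) (lam α) 0 + (-(((P α) / (f α)) * γ * (V α α))) * myItES γ (f α) (lam α) 0 + (-(((P α) / (f α)) * γ * (V α α) * (γ/(f α)))) * myItEC γ (f α) (lam α) 0) + ∑ β ∈ S, (((γ * ((V α β) * (P β) / ((lam α) - (lam β)))) * (γ/(f β))) * myIES γ (f β) (lam β) 0 + (-(γ * ((V α β) * (P β) / ((lam α) - (lam β))))) * myIEC γ (f β) (lam β) 0 + (-((γ * ((V α β) * (P β) / ((lam α) - (lam β)))) * (γ/(f α)))) * myIES γ (f α) (lam α) 0 + (γ * ((V α β) * (P β) / ((lam α) - (lam β)))) * myIEC γ (f α) (lam α) 0)) :=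
    intervalIntegral.integral_eq_sub_of_hasDerivAt (fun x _ => hFder x)
      (hcont.intervalIntegrable 0 t)
  -- termwise identities
  have hterm : ∀ β ∈ S,
      (((γ * ((V α β) * (P β) / ((lam α) - (lam β)))) * (γ/(f β))) * (-γ/2 * myES γ (f β) t + (f β)/2 * myEC γ (f β) t) + (-(γ * ((V α β) * (P β) / ((lam α) - (lam β))))) * (-γ/2 * myEC γ (f β) t - (f β)/2 * myES γ (f β) t) + (-((γ * ((V α β) * (P β) / ((lam α) - (lam β)))) * (γ/(f α)))) * (-γ/2 * myES γ (f α) t + (f α)/2 * myEC γ (f α) t) + (γ * ((V α β) * (P β) / ((lam α) - (lam β)))) * (-γ/2 * myEC γ (f α) t - (f α)/2 * myES γ (f α) t)) + γ * (((γ * ((V α β) * (P β) / ((lam α) - (lam β)))) * (γ/(f β))) * myES γ (f β) t + (-(γ * ((V α β) * (P β) / ((lam α) - (lam β))))) * myEC γ (f β) t + (-((γ * ((V α β) * (P β) / ((lam α) - (lam β)))) * (γ/(f α)))) * myES γ (f α) t + (γ * ((V α β) * (P β) / ((lam α) - (lam β)))) * myEC γ (f α) t) + lam α * ((((γ * ((V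 α β) * (P β) / ((lam α) - (lam β)))) * (γ/(f β))) * myIES γ (f β) (lam β) t + (-(γ * ((V α β) * (P β) / ((lam α) - (lam β))))) * myIEC γ (f β) (lam β) t + (-((γ * ((V α β) * (P β) / ((lam α) - (lam β)))) * (γ/(f α)))) * myIES γ (f α) (lam α) t + (γ * ((V α β) * (P β) / ((lam α) - (lam β)))) * myIEC γ (f α) (lam α) t) - (((γ * ((V α β) * (P β) / ((lam α) - (lam β)))) * (γ/(f β))) * myIES γ (f β) (lam β) 0 + (-(γ * ((V α β) * (P β) / ((lam α) - (lam β))))) * myIEC γ (f β) (lam β) 0 + (-((γ * ((V α β) * (P β) / ((lam α) - (lam β)))) * (γ/(f α)))) * myIES γ (f α) (lam α) 0 + (γ * ((V α β) * (P β) / ((lam α) - (lam β)))) * myIEC γ (f α) (lam α) 0))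
      = -(γ * (V α β * ξ0 β t)) := by
    intro β hβ
    obtain ⟨hb4, hfb, hlb, hab⟩ := hfactsS β hβ
    have := offdiag_identity γ (lam α) (lam β) (f α) (f β) (P β) (V α β) t ha4 hb4 hla hlb hfa hfb hab
    rw [hξ0]
    refine this.trans ?_
    simp only [myES]
    ring
  have hdiag : ((((P α) / (f α)) * (2*(γ^2/(f α)^2) * (V α α))) * (-γ/2 * myES γ (f α) t + (f α)/2 * myEC γ (f α) t) + (-(((P α) / (f α)) * γ * (V α α))) * (myES γ (f α) t + t * (-γ/2 * myES γ (f α) t + (f α)/2 * myEC γ (f α) t)) + (-(((P α) / (f α)) * γ * (V α α) * (γ/(f α)))) * (myEC γ (f α) t + t * (-γ/2 * myEC γ (f α) t - (f α)/2 * myES γ (f α) t))) + γ * ((((P α) / (f α)) * (2*(γ^2/(f α)^2) * (V α α))) * myES γ (f α) t + (-(((P α) / (f α)) * γ * (V α α))) * (t * myES γ (f α) t) + (-(((P α) / (f α)) * γ * (V α α) * (γ/(f α)))) * (t * myEC γ (f α) t)) + lam α * (((((P α) / (f α)) * (2*(γ^2/(f α)^2) * (V α α))) * myIES γ (f α) (lam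 α) t + (-(((P α) / (f α)) * γ * (V α α))) * myItES γ (f α) (lam α) t + (-(((P α) / (f α)) * γ * (V α α) * (γ/(f α)))) * myItEC γ (f α) (lam α) t) - ((((P α) / (f α)) * (2*(γ^2/(f α)^2) * (V α α))) * myIES γ (f α) (lam α) 0 + (-(((P α) / (f α)) * γ * (V α α))) * myItES γ (f α) (lam α) 0 + (-(((P α) / (f α)) * γ * (V α α) * (γ/(f α)))) * myItEC γ (f α) (lam α) 0))
      = -(γ * (V α α * ξ0 α t)) := by
    have := diag_identity γ (lam α) (f α) (P α) (V α α) t ha4 hla hfa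
    rw [hξ0]
    refine this.trans ?_
    simp only [myES]
    ring
  -- assemble
  rw [hdD.deriv, hD2 t, hint]
  rw [← Finset.add_sum_erase _ (fun β => V α β * ξ0 β t) hα, ← hS]
  have e1 : ∑ β ∈ S, ((((γ * ((V α β) * (P β) / ((lam α) - (lam β)))) * (γ/(f β))) * (-γ/2 * myES γ (f β) t + (f β)/2 * myEC γ (f β) t) + (-(γ * ((V α β) * (P β) / ((lam α) - (lam β))))) * (-γ/2 * myEC γ (f β) t - (f β)/2 * myES γ (f β) t) + (-((γ * ((V α β) * (P β) / ((lam α) - (lam β)))) * (γ/(f α)))) * (-γ/2 * myES γ (f α) t + (f α)/2 * myEC γ (f α) t) + (γ * ((V α β) * (P β) / ((lam α) - (lam β)))) * (-γ/2 * myEC γ (f α) t - (f α)/2 * myES γ (f α) t)) + γ * (((γ * ((V α β) * (P β) / ((lam α) - (lam β)))) * (γ/(f β))) * myES γ (f β) t + (-(γ * ((V α β) * (P β) / ((lam α) - (lam β))))) * myEC γ (f β) t + (-((γ * ((V α β) * (P β) / ((lam α) - (lam β)))) * (γ/(f α)))) * myES γ (f α) t + (γ * ((V α β) * (P β) / ((lam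 α) - (lam β)))) * myEC γ (f α) t) + lam α * ((((γ * ((V α β) * (P β) / ((lam α) - (lam β)))) * (γ/(f β))) * myIES γ (f β) (lam β) t + (-(γ * ((V α β) * (P β) / ((lam α) - (lam β))))) * myIEC γ (f β) (lam β) t + (-((γ * ((V α β) * (P β) / ((lam α) - (lam β)))) * (γ/(f α)))) * myIES γ (f α) (lam α) t + (γ * ((V α β) * (P β) / ((lam α) - (lam β)))) * myIEC γ (f α) (lam α) t) - (((γ * ((V α β) * (P β) / ((lam α) - (lam β)))) * (γ/(f β))) * myIES γ (f β) (lam β) 0 + (-(γ * ((V α β) * (P β) / ((lam α) - (lam β))))) * myIEC γ (f β) (lam β) 0 + (-((γ * ((V α β) * (P β) / ((lam α) - (lam β)))) * (γ/(f α)))) * myIES γ (f α) (lam α) 0 + (γ * ((V α β) * (P β) / ((lam α) - (lam β)))) * myIEC γ (f α) (lam α) 0)))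
      = ∑ β ∈ S, (((γ * ((V α β) * (P β) / ((lam α) - (lam β)))) * (γ/(f β))) * (-γ/2 * myES γ (f β) t + (f β)/2 * myEC γ (f β) t) + (-(γ * ((V α β) * (P β) / ((lam α) - (lam β))))) * (-γ/2 * myEC γ (f β) t - (f β)/2 * myES γ (f β) t) + (-((γ * ((V α β) * (P β) / ((lam α) - (lam β)))) * (γ/(f α)))) * (-γ/2 * myES γ (f α) t + (f α)/2 * myEC γ (f α) t) + (γ * ((V α β) * (P β) / ((lam α) - (lam β)))) * (-γ/2 * myEC γ (f α) t - (f α)/2 * myES γ (f α) t)) + ∑ β ∈ S, (γ * (((γ * ((V α β) * (P β) / ((lam α) - (lam β)))) * (γ/(f β))) * myES γ (f β) t + (-(γ * ((V α β) * (P β) / ((lam α) - (lam β))))) * myEC γ (f β) t + (-((γ * ((V α β) * (P β) / ((lam α) - (lam β)))) * (γ/(f α)))) * myES γ (f α) t + (γ * ((V α β) * (P β) / ((lam α) - (lam β)))) * myEC γ (f α) t)) + ∑ β ∈ S, (lam α * ((((γ * ((V α β) * (P β) / ((lam α) - (lam β)))) * (γ/(f β))) * myIES γ (f β) (lam β) t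 + (-(γ * ((V α β) * (P β) / ((lam α) - (lam β))))) * myIEC γ (f β) (lam β) t + (-((γ * ((V α β) * (P β) / ((lam α) - (lam β)))) * (γ/(f α)))) * myIES γ (f α) (lam α) t + (γ * ((V α β) * (P β) / ((lam α) - (lam β)))) * myIEC γ (f α) (lam α) t) - (((γ * ((V α β) * (P β) / ((lam α) - (lam β)))) * (γ/(f β))) * myIES γ (f β) (lam β) 0 + (-(γ * ((V α β) * (P β) / ((lam α) - (lam β))))) * myIEC γ (f β) (lam β) 0 + (-((γ * ((V α β) * (P β) / ((lam α) - (lam β)))) * (γ/(f α)))) * myIES γ (f α) (lam α) 0 + (γ * ((V α β) * (P β) / ((lam α) - (lam β)))) * myIEC γ (f α) (lam α) 0))) := by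
    rw [← Finset.sum_add_distrib, ← Finset.sum_add_distrib]
  have e2 : ∑ β ∈ S, ((((γ * ((V α β) * (P β) / ((lam α) - (lam β)))) * (γ/(f β))) * (-γ/2 * myES γ (f β) t + (f β)/2 * myEC γ (f β) t) + (-(γ * ((V α β) * (P β) / ((lam α) - (lam β))))) * (-γ/2 * myEC γ (f β) t - (f β)/2 * myES γ (f β) t) + (-((γ * ((V α β) * (P β) / ((lam α) - (lam β)))) * (γ/(f α)))) * (-γ/2 * myES γ (f α) t + (f α)/2 * myEC γ (f α) t) + (γ * ((V α β) * (P β) / ((lam α) - (lam β)))) * (-γ/2 * myEC γ (f α) t - (f α)/2 * myES γ (f α) t)) + γ * (((γ * ((V α β) * (P β) / ((lam α) - (lam β)))) * (γ/(f β))) * myES γ (f β) t + (-(γ * ((V α β) * (P β) / ((lam α) - (lam β))))) * myEC γ (f β) t + (-((γ * ((V α β) * (P β) / ((lam α) - (lam β)))) * (γ/(f α)))) * myES γ (f α) t + (γ * ((V α β) * (P β) / ((lam α) - (lam β)))) * myEC γ (f α) t) + lam α * ((((γ * ((V α β) * (P β) / ((lam α) - (lam β)))) * (γ/(f β))) * myIES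 γ (f β) (lam β) t + (-(γ * ((V α β) * (P β) / ((lam α) - (lam β))))) * myIEC γ (f β) (lam β) t + (-((γ * ((V α β) * (P β) / ((lam α) - (lam β)))) * (γ/(f α)))) * myIES γ (f α) (lam α) t + (γ * ((V α β) * (P β) / ((lam α) - (lam β)))) * myIEC γ (f α) (lam α) t) - (((γ * ((V α β) * (P β) / ((lam α) - (lam β)))) * (γ/(f β))) * myIES γ (f β) (lam β) 0 + (-(γ * ((V α β) * (P β) / ((lam α) - (lam β))))) * myIEC γ (f β) (lam β) 0 + (-((γ * ((V α β) * (P β) / ((lam α) - (lam β)))) * (γ/(f α)))) * myIES γ (f α) (lam α) 0 + (γ * ((V α β) * (P β) / ((lam α) - (lam β)))) * myIEC γ (f α) (lam α) 0)))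
      = ∑ β ∈ S, -(γ * (V α β * ξ0 β t)) := Finset.sum_congr rfl hterm
  have m1 : ∑ β ∈ S, (γ * (((γ * ((V α β) * (P β) / ((lam α) - (lam β)))) * (γ/(f β))) * myES γ (f β) t + (-(γ * ((V α β) * (P β) / ((lam α) - (lam β))))) * myEC γ (f β) t + (-((γ * ((V α β) * (P β) / ((lam α) - (lam β)))) * (γ/(f α)))) * myES γ (f α) t + (γ * ((V α β) * (P β) / ((lam α) - (lam β)))) * myEC γ (f α) t)) = γ * ∑ β ∈ S, (((γ * ((V α β) * (P β) / ((lam α) - (lam β)))) * (γ/(f β))) * myES γ (f β) t + (-(γ * ((V α β) * (P β) / ((lam α) - (lam β))))) * myEC γ (f β) t + (-((γ * ((V α β) * (P β) / ((lam α) - (lam β)))) * (γ/(f α)))) * myES γ (f α) t + (γ * ((V α β) * (P β) / ((lam α) - (lam β)))) * myEC γ (f α) t) := (Finset.mul_sum _ _ _).symm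
  have m2 : ∑ β ∈ S, (lam α * ((((γ * ((V α β) * (P β) / ((lam α) - (lam β)))) * (γ/(f β))) * myIES γ (f β) (lam β) t + (-(γ * ((V α β) * (P β) / ((lam α) - (lam β))))) * myIEC γ (f β) (lam β) t + (-((γ * ((V α β) * (P β) / ((lam α) - (lam β)))) * (γ/(f α)))) * myIES γ (f α) (lam α) t + (γ * ((V α β) * (P β) / ((lam α) - (lam β)))) * myIEC γ (f α) (lam α) t) - (((γ * ((V α β) * (P β) / ((lam α) - (lam β)))) * (γ/(f β))) * myIES γ (f β) (lam β) 0 + (-(γ * ((V α β) * (P β) / ((lam α) - (lam β))))) * myIEC γ (f β) (lam β) 0 + (-((γ * ((V α β) * (P β) / ((lam α) - (lam β)))) * (γ/(f α)))) * myIES γ (f α) (lam α) 0 + (γ * ((V α β) * (P β) / ((lam α) - (lam β)))) * myIEC γ (f α) (lam α) 0))) = lam α * ∑ β ∈ S, ((((γ * ((V α β) * (P β) / ((lam α) - (lam β)))) * (γ/(f β))) * myIES γ (f β) (lam β) t + (-(γ * ((V α β) * (P β) / ((lam α) - (lam β))))) * myIEC γ (f β) (lam β) t + (-((γ * ((V α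 β) * (P β) / ((lam α) - (lam β)))) * (γ/(f α)))) * myIES γ (f α) (lam α) t + (γ * ((V α β) * (P β) / ((lam α) - (lam β)))) * myIEC γ (f α) (lam α) t) - (((γ * ((V α β) * (P β) / ((lam α) - (lam β)))) * (γ/(f β))) * myIES γ (f β) (lam β) 0 + (-(γ * ((V α β) * (P β) / ((lam α) - (lam β))))) * myIEC γ (f β) (lam β) 0 + (-((γ * ((V α β) * (P β) / ((lam α) - (lam β)))) * (γ/(f α)))) * myIES γ (f α) (lam α) 0 + (γ * ((V α β) * (P β) / ((lam α) - (lam β)))) * myIEC γ (f α) (lam α) 0)) := (Finset.mul_sum _ _ _).symm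
  have m3 : ∑ β ∈ S, ((((γ * ((V α β) * (P β) / ((lam α) - (lam β)))) * (γ/(f β))) * myIES γ (f β) (lam β) t + (-(γ * ((V α β) * (P β) / ((lam α) - (lam β))))) * myIEC γ (f β) (lam β) t + (-((γ * ((V α β) * (P β) / ((lam α) - (lam β)))) * (γ/(f α)))) * myIES γ (f α) (lam α) t + (γ * ((V α β) * (P β) / ((lam α) - (lam β)))) * myIEC γ (f α) (lam α) t) - (((γ * ((V α β) * (P β) / ((lam α) - (lam β)))) * (γ/(f β))) * myIES γ (f β) (lam β) 0 + (-(γ * ((V α β) * (P β) / ((lam α) - (lam β))))) * myIEC γ (f β) (lam β) 0 + (-((γ * ((V α β) * (P β) / ((lam α) - (lam β)))) * (γ/(f α)))) * myIES γ (f α) (lam α) 0 + (γ * ((V α β) * (P β) / ((lam α) - (lam β)))) * myIEC γ (f α) (lam α) 0)) = ∑ β ∈ S, (((γ * ((V α β) * (P β) / ((lam α) - (lam β)))) * (γ/(f β))) * myIES γ (f β) (lam β) t + (-(γ * ((V α β) * (P β) / ((lam α) - (lam β))))) * myIEC γ (f β) (lam β) t + (-((γ * ((V α β) * (P β) / ((lam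 α) - (lam β)))) * (γ/(f α)))) * myIES γ (f α) (lam α) t + (γ * ((V α β) * (P β) / ((lam α) - (lam β)))) * myIEC γ (f α) (lam α) t) - ∑ β ∈ S, (((γ * ((V α β) * (P β) / ((lam α) - (lam β)))) * (γ/(f β))) * myIES γ (f β) (lam β) 0 + (-(γ * ((V α β) * (P β) / ((lam α) - (lam β))))) * myIEC γ (f β) (lam β) 0 + (-((γ * ((V α β) * (P β) / ((lam α) - (lam β)))) * (γ/(f α)))) * myIES γ (f α) (lam α) 0 + (γ * ((V α β) * (P β) / ((lam α) - (lam β)))) * myIEC γ (f α) (lam α) 0) := Finset.sum_sub_distrib _ _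
  have m4 : ∑ β ∈ S, -(γ * (V α β * ξ0 β t)) = -(γ * ∑ β ∈ S, (V α β * ξ0 β t)) := by
    rw [Finset.sum_neg_distrib, ← Finset.mul_sum]
  linear_combination hdiag - e1 + e2 - m1 - m2 - lam α * m3 + m4
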